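/- For all integers m ≥ 3 and n ≥ 2, the spectral gap of the generalised pancake graph satisfies λ_1(P_m(n)) − λ_2(P_m(n)) < 2. -/

import Mathlib

open Polynomial

/-- An `m`-coloured permutation of `{1, …, n}`: a pair `(χ, ψ)` of a colour
function `χ : [n] → ℤ/mℤ` and a permutation `ψ` of `[n]` (positions and letters
are 0-indexed, so the letter `1` of the paper corresponds to `0 : Fin n`). -/
abbrev ColouredPerm (m n : ℕ) := (Fin n → ZMod m) × Equiv.Perm (Fin n)

/-- The map on positions underlying reversal of the prefix of length `k`
(for `1 ≤ k ≤ n`; it is the identity outside this range of `k`). -/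
def flipFun (n k : ℕ) : Fin n → Fin n := fun t =>
  if h : t.val < k ∧ k ≤ n then ⟨k - 1 - t.val, by omega⟩ else t

theorem flipFun_involutive (n k : ℕ) : Function.Involutive (flipFun n k) := by
  intro t
  unfold flipFun
  by_cases h : t.val < k ∧ k ≤ n
  · rw [dif_pos h, dif_pos (by simp only [Fin.val_mk]; omega)]
    apply Fin.ext
    simp only [Fin.val_mk]
    omega
  · rw [dif_neg h, dif_neg h]

/-- Reversal of the prefix of length `k`, as a permutation of positions. -/
def flipPerm (n k : ℕ) : Equiv.Perm (Fin n) := (flipFun_involutive n k).toPerm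

/-- The prefix reversal `r_k^ε` acting on `m`-coloured permutations: it
reverses the prefix of length `k` and adds `ε` to the colours in that prefix. -/
def prefixRev (m n : ℕ) (k : ℕ) (ε : ZMod m) (σ : ColouredPerm m n) :
    ColouredPerm m n :=
  (fun t => if t.val < k then σ.1 (flipPerm n k t) + ε else σ.1 t,
   σ.2 * flipPerm n k)

/-- Adjacency in the generalised pancake graph: two distinct coloured
permutations are adjacent iff one is obtained from the other by a prefix
reversal `r_k^ε` with `1 ≤ k ≤ n` and `ε ∈ {+1, -1}`. -/
def pancakeAdj (m n : ℕ) (σ τ : ColouredPerm m n) : Prop :=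
  σ ≠ τ ∧ ∃ k, 1 ≤ k ∧ k ≤ n ∧ ∃ ε : ZMod m, (ε = 1 ∨ ε = -1) ∧
    (τ = prefixRev m n k ε σ ∨ σ = prefixRev m n k ε τ)

/-- The generalised pancake graph `𝒫_m(n)`. -/
def pancakeGraph (m n : ℕ) : SimpleGraph (ColouredPerm m n) where
  Adj := pancakeAdj m n
  symm := ⟨by
    rintro a b ⟨hab, k, hk1, hk2, ε, hε, h⟩
    exact ⟨hab.symm, k, hk1, hk2, ε, hε, h.symm⟩⟩
  loopless := ⟨by rintro a ⟨h, -⟩; exact h rfl⟩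

open Classical in
/-- The (real) adjacency matrix of the generalised pancake graph `𝒫_m(n)`. -/
noncomputable def pancakeAdjMatrix (m n : ℕ) :
    Matrix (ColouredPerm m n) (ColouredPerm m n) ℝ :=
  Matrix.of fun σ τ => if pancakeAdj m n σ τ then 1 else 0

/-- The `i`-th largest eigenvalue (`i = 1, 2, …`) of a real matrix `M`,
i.e. the `i`-th largest root of its characteristic polynomial, counted
with multiplicity (junk value `0` if there are fewer than `i` real roots). -/
noncomputable def nthLargestEig {V : Type*} [Fintype V] [DecidableEq V]
    (M : Matrix V V ℝ) (i : ℕ) : ℝ :=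
  ((M.charpoly.roots.sort (· ≤ ·)).reverse).getD (i - 1) 0

/-- The diagonal matrix `D_n = diag(0, 1, …, n-1)`. -/
noncomputable def Dmat (n : ℕ) : Matrix (Fin n) (Fin n) ℝ :=
  Matrix.diagonal fun j => (j.val : ℝ)

/-- The 0/1 matrix `E_n`, whose `(i, j)` entry (1-indexed) is `1` iff
`i + j ≤ n + 1`. -/
noncomputable def Emat (n : ℕ) : Matrix (Fin n) (Fin n) ℝ :=
  Matrix.of fun j j' => if (j.val + 1) + (j'.val + 1) ≤ n + 1 then 1 else 0

/-- The `mn × mn` block circulant matrix `circ(B_0, …, B_{m-1})` whose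
`(r, s)` block is `B_{s - r mod m}`. -/
def blockCirc (m n : ℕ) (B : ZMod m → Matrix (Fin n) (Fin n) ℝ) :
    Matrix (ZMod m × Fin n) (ZMod m × Fin n) ℝ :=
  Matrix.of fun p q => B (q.1 - p.1) p.2 q.2

/-- The part `V_{i,j}` of the vertex set of `𝒫_m(n)`: those coloured
permutations in which the letter `1` (here `0 : Fin n`) occupies position `j`
with colour `i`. -/
def Vpart (m n : ℕ) (i : ZMod m) (j : Fin n) : Set (ColouredPerm m n) :=
  {σ | σ.2 j = ⟨0, j.pos⟩ ∧ σ.1 j = i}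


section SmallMatrix
open Matrix

noncomputable def McM (n : ℕ) (c : ℝ) : Matrix (Fin n) (Fin n) ℝ := 2 • Dmat n + c • Emat n

lemma Emat_apply (n : ℕ) (j j' : Fin n) :
    Emat n j j' = if (j.val + 1) + (j'.val + 1) ≤ n + 1 then 1 else 0 := rfl

lemma Emat_symm (n : ℕ) (j j' : Fin n) : Emat n j j' = Emat n j' j := by
  rw [Emat_apply, Emat_apply]
  split_ifs with h1 h2 <;> first | rfl | omega

lemma Emat_zero_or_one (n : ℕ) (j j' : Fin n) : Emat n j j' = 0 ∨ Emat n j j' = 1 := by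
  rw [Emat_apply]; split_ifs <;> simp

lemma Emat_nonneg (n : ℕ) (j j' : Fin n) : 0 ≤ Emat n j j' := by
  rcases Emat_zero_or_one n j j' with h | h <;> rw [h] <;> norm_num

lemma RE_le (n : ℕ) (j : Fin n) : ∑ j', Emat n j j' ≤ (n : ℝ) - j.val := by
  have hcard : (Finset.univ.filter
      (fun j' : Fin n => (j.val + 1) + (j'.val + 1) ≤ n + 1)).card ≤ n - j.val := by
    have := Finset.card_le_card_of_injOn (f := fun j' : Fin n => j'.val)
      (s := Finset.univ.filter (fun j' : Fin n => (j.val + 1) + (j'.val + 1) ≤ n + 1))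
      (t := Finset.range (n - j.val))
      (by intro x hx
          simp only [Finset.coe_filter, Finset.mem_univ, true_and, Set.mem_setOf_eq] at hx
          simp only [Finset.coe_range, Set.mem_Iio]; omega)
      (by intro a _ b _ h; exact Fin.ext h)
    simpa using this
  calc ∑ j', Emat n j j'
      = ((Finset.univ.filter
        (fun j' : Fin n => (j.val + 1) + (j'.val + 1) ≤ n + 1)).card : ℝ) := by
        simp only [Emat_apply]
        rw [Finset.sum_boole]
    _ ≤ ((n - j.val : ℕ) : ℝ) := by exact_mod_cast hcard
    _ ≤ (n : ℝ) - j.val := by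
        have : j.val ≤ n := le_of_lt j.isLt
        push_cast [Nat.cast_sub this]
        ring_nf
        exact le_refl _

lemma pairsum_eq (n : ℕ) (f : Fin n → ℝ) :
    ∑ j, ∑ j', Emat n j j' * ((f j + f j') / 2) = ∑ j, (∑ j', Emat n j j') * f j := by
  have h1 : ∑ j, ∑ j', Emat n j j' * f j = ∑ j, (∑ j', Emat n j j') * f j := by
    congr 1; ext j; rw [Finset.sum_mul]
  have h2 : ∑ j, ∑ j', Emat n j j' * f j' = ∑ j, (∑ j', Emat n j j') * f j := by
    rw [Finset.sum_comm]
    calc ∑ j', ∑ j, Emat n j j' * f j'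
        = ∑ j', (∑ j, Emat n j' j) * f j' := by
          congr 1; ext j'; rw [Finset.sum_mul]; congr 1; ext j; rw [Emat_symm]
      _ = ∑ j, (∑ j', Emat n j j') * f j := rfl
  calc ∑ j, ∑ j', Emat n j j' * ((f j + f j') / 2)
      = ∑ j, ∑ j', (Emat n j j' * f j / 2 + Emat n j j' * f j' / 2) := by
        congr 1; ext j; congr 1; ext j'; ring
    _ = (∑ j, ∑ j', Emat n j j' * f j) / 2 + (∑ j, ∑ j', Emat n j j' * f j') / 2 := by
        simp [Finset.sum_add_distrib, Finset.sum_div]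
    _ = ∑ j, (∑ j', Emat n j j') * f j := by rw [h1, h2]; ring

lemma abs_q_le (n : ℕ) (w : Fin n → ℝ) :
    |∑ j, (∑ j', Emat n j j' * w j') * w j| ≤ ∑ j, (∑ j', Emat n j j') * (w j)^2 := by
  have hterm : ∀ j j' : Fin n, |Emat n j j' * w j' * w j|
      ≤ Emat n j j' * (((w j)^2 + (w j')^2) / 2) := by
    intro j j'
    rcases Emat_zero_or_one n j j' with h | h <;> rw [h]
    · simp
    · rw [one_mul, one_mul]
      rw [abs_mul]
      nlinarith [sq_abs (w j), sq_abs (w j'), sq_nonneg (|w j'| - |w j|), abs_nonneg (w j), abs_nonneg (w j')]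
  calc |∑ j, (∑ j', Emat n j j' * w j') * w j|
      ≤ ∑ j, abs ((∑ j', Emat n j j' * w j') * w j) := Finset.abs_sum_le_sum_abs _ _
    _ ≤ ∑ j, ∑ j', abs (Emat n j j' * w j' * w j) := by
        apply Finset.sum_le_sum; intro j _
        calc |(∑ j', Emat n j j' * w j') * w j|
            = |∑ j', Emat n j j' * w j' * w j| := by rw [Finset.sum_mul]
          _ ≤ ∑ j', abs (Emat n j j' * w j' * w j) := Finset.abs_sum_le_sum_abs _ _
    _ ≤ ∑ j, ∑ j', Emat n j j' * (((w j)^2 + (w j')^2) / 2) := by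
        apply Finset.sum_le_sum; intro j _
        exact Finset.sum_le_sum fun j' _ => hterm j j'
    _ = ∑ j, (∑ j', Emat n j j') * (w j)^2 := pairsum_eq n (fun j => (w j)^2)

lemma McM_mulVec (n : ℕ) (c : ℝ) (w : Fin n → ℝ) (j : Fin n) :
    (McM n c *ᵥ w) j = 2 * (j.val : ℝ) * w j + c * ∑ j', Emat n j j' * w j' := by
  unfold McM
  rw [Matrix.add_mulVec]
  simp only [Pi.add_apply]
  congr 1
  · have : ((2:ℕ) • Dmat n) *ᵥ w = (2:ℕ) • (Dmat n *ᵥ w) := by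
      rw [Matrix.smul_mulVec]
    rw [this]
    simp [Dmat, Matrix.mulVec_diagonal]
    try ring
  · rw [Matrix.smul_mulVec]
    simp only [Pi.smul_apply, smul_eq_mul]
    rfl

lemma quad_eq (n : ℕ) (c : ℝ) (w : Fin n → ℝ) (μ : ℝ) (heig : McM n c *ᵥ w = μ • w) :
    μ * ∑ j, (w j)^2 = 2 * (∑ j, (j.val : ℝ) * (w j)^2)
      + c * ∑ j, (∑ j', Emat n j j' * w j') * w j := by
  have h : ∀ j, (McM n c *ᵥ w) j = μ * w j := fun j => by rw [heig]; simp
  calc μ * ∑ j, (w j)^2 = ∑ j, (McM n c *ᵥ w) j * w j := by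
        rw [Finset.mul_sum]
        refine Finset.sum_congr rfl fun j _ => ?_
        rw [h j]; ring
    _ = ∑ j, (2 * (j.val:ℝ) * w j + c * ∑ j', Emat n j j' * w j') * w j := by
        refine Finset.sum_congr rfl fun j _ => ?_
        rw [McM_mulVec]
    _ = _ := by
        rw [Finset.mul_sum, Finset.mul_sum, ← Finset.sum_add_distrib]
        refine Finset.sum_congr rfl fun j _ => ?_
        ring

lemma eig_lt (n : ℕ) (c : ℝ) (hn : 1 ≤ n) (hc2 : |c| ≤ 2) (hcs : c = -2 ∨ |c| < 2)
    (w : Fin n → ℝ) (μ : ℝ) (hw : w ≠ 0) (heig : McM n c *ᵥ w = μ • w) :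
    μ < 2 * n := by
  set W := ∑ j, (w j)^2 with hWdef
  set J := ∑ j, (j.val : ℝ) * (w j)^2 with hJdef
  set K := ∑ j, ((n:ℝ) - j.val) * (w j)^2 with hKdef
  set R := ∑ j, (∑ j', Emat n j j') * (w j)^2 with hRdef
  set q := ∑ j, (∑ j', Emat n j j' * w j') * w j with hqdef
  have hW : 0 < W := by
    rcases Function.ne_iff.mp hw with ⟨j0, hj0⟩
    have h1 : (0:ℝ) < (w j0)^2 := lt_of_le_of_ne (sq_nonneg _) (Ne.symm (pow_ne_zero 2 hj0))
    have h2 : (w j0)^2 ≤ W :=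
      Finset.single_le_sum (f := fun j => (w j)^2) (fun j _ => sq_nonneg _) (Finset.mem_univ j0)
    linarith
  have hJK : J + K = (n:ℝ) * W := by
    rw [hJdef, hKdef, hWdef, ← Finset.sum_add_distrib, Finset.mul_sum]
    refine Finset.sum_congr rfl fun j _ => ?_
    ring
  have hRK : R ≤ K :=
    Finset.sum_le_sum fun j _ => mul_le_mul_of_nonneg_right (RE_le n j) (sq_nonneg _)
  have hR0 : 0 ≤ R := by
    refine Finset.sum_nonneg fun j _ => mul_nonneg ?_ (sq_nonneg _)
    exact Finset.sum_nonneg fun j' _ => Emat_nonneg n j j'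
  have hqR : |q| ≤ R := abs_q_le n w
  have hKW : W ≤ K := by
    refine Finset.sum_le_sum fun j _ => ?_
    have hj1 : ((j.val + 1 : ℕ) : ℝ) ≤ (n : ℝ) := by exact_mod_cast Nat.lt_iff_add_one_le.mp j.isLt
    push_cast at hj1
    nlinarith [sq_nonneg (w j)]
  have hquad : μ * W = 2*J + c*q := quad_eq n c w μ heig
  have habs : |c * q| ≤ 2 * R := by
    rw [abs_mul]
    nlinarith [abs_nonneg q, abs_nonneg c, hqR, hc2]
  have hcq : c * q ≤ 2 * K := le_trans (le_abs_self _) (le_trans habs (by linarith))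
  have hle : μ ≤ 2*(n:ℝ) := by
    have h1 : μ * W ≤ (2*(n:ℝ)) * W := by
      have : (2:ℝ)*J + 2*K = 2*((n:ℝ)*W) := by linarith
      calc μ * W = 2*J + c*q := hquad
        _ ≤ 2*J + 2*K := by linarith
        _ = (2*(n:ℝ)) * W := by linarith
    exact (mul_le_mul_iff_of_pos_right hW).mp h1
  rcases lt_or_eq_of_le hle with h | heq
  · exact h
  exfalso
  have h2K : 2*K ≤ c*q := by
    have : (2*(n:ℝ)) * W = 2*J + c*q := by rw [← heq]; exact hquad
    have h3 : (2:ℝ)*J + 2*K = 2*((n:ℝ)*W) := by linarith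
    linarith
  rcases hcs with hc | hc
  · -- c = -2
    subst hc
    have hq2 : q ≤ -K := by linarith
    have hsum0 : ∑ j, ∑ j', Emat n j j' * (w j + w j')^2 / 2 = q + R := by
      have hq' : q = ∑ j, ∑ j', Emat n j j' * w j' * w j := by
        rw [hqdef]
        refine Finset.sum_congr rfl fun j _ => ?_
        rw [Finset.sum_mul]
      rw [hq', hRdef, ← pairsum_eq n (fun j => (w j)^2), ← Finset.sum_add_distrib]
      refine Finset.sum_congr rfl fun j _ => ?_
      rw [← Finset.sum_add_distrib]
      refine Finset.sum_congr rfl fun j' _ => ?_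
      ring
    have hnonneg : ∀ j ∈ Finset.univ, (0:ℝ) ≤ ∑ j', Emat n j j' * (w j + w j')^2 / 2 := by
      intro j _
      refine Finset.sum_nonneg fun j' _ => ?_
      exact div_nonneg (mul_nonneg (Emat_nonneg n j j') (sq_nonneg _)) (by norm_num)
    have hzero : ∀ j j' : Fin n, Emat n j j' * (w j + w j')^2 / 2 = 0 := by
      have hsle : ∑ j, ∑ j', Emat n j j' * (w j + w j')^2 / 2 ≤ 0 := by
        rw [hsum0]; linarith
      have hsge : 0 ≤ ∑ j, ∑ j', Emat n j j' * (w j + w j')^2 / 2 :=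
        Finset.sum_nonneg hnonneg
      have hs0 : ∑ j, ∑ j', Emat n j j' * (w j + w j')^2 / 2 = 0 := le_antisymm hsle hsge
      intro j j'
      have hrow := (Finset.sum_eq_zero_iff_of_nonneg hnonneg).mp hs0 j (Finset.mem_univ j)
      have hterm : ∀ j'' ∈ Finset.univ, (0:ℝ) ≤ Emat n j j'' * (w j + w j'')^2 / 2 := by
        intro j'' _
        exact div_nonneg (mul_nonneg (Emat_nonneg n j j'') (sq_nonneg _)) (by norm_num)
      exact (Finset.sum_eq_zero_iff_of_nonneg hterm).mp hrow j' (Finset.mem_univ j')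
    have hsmall : ∀ t : Fin n, 2*t.val + 2 ≤ n + 1 → w t = 0 := by
      intro t ht
      have h := hzero t t
      rw [Emat_apply, if_pos (by omega : (t.val + 1) + (t.val + 1) ≤ n + 1)] at h
      nlinarith [sq_nonneg (w t + w t)]
    have hbig : ∀ j : Fin n, ¬(2*j.val + 2 ≤ n + 1) → w j = 0 := by
      intro j hj
      have hrow : (McM n (-2) *ᵥ w) j = μ * w j := by rw [heig]; simp
      rw [McM_mulVec] at hrow
      have hS : ∑ j', Emat n j j' * w j' = 0 := by
        refine Finset.sum_eq_zero fun j' _ => ?_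
        rw [Emat_apply]
        by_cases hcond : (j.val + 1) + (j'.val + 1) ≤ n + 1
        · rw [if_pos hcond, one_mul]
          exact hsmall j' (by omega)
        · rw [if_neg hcond, zero_mul]
      rw [hS, heq] at hrow
      have hjn : (j.val : ℝ) < (n:ℝ) := by exact_mod_cast j.isLt
      have h0 : (2*(n:ℝ) - 2*(j.val:ℝ)) * w j = 0 := by linarith
      rcases mul_eq_zero.mp h0 with h1 | h1
      · linarith
      · exact h1
    apply hw
    funext j
    by_cases h : 2*j.val + 2 ≤ n + 1
    · exact hsmall j h
    · exact hbig j h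
  · -- |c| < 2
    have hcqK : c * q ≤ |c| * K := by
      have h1 : |c * q| ≤ |c| * K := by
        rw [abs_mul]
        nlinarith [abs_nonneg c, abs_nonneg q]
      exact le_trans (le_abs_self _) h1
    have hK0 : K ≤ 0 := by
      by_cases hKpos : 0 < K
      · exfalso
        have := mul_lt_mul_of_pos_right hc hKpos
        linarith
      · linarith
    linarith

lemma dotProduct_self_pos {n : ℕ} {x : Fin n → ℝ} (hx : x ≠ 0) : 0 < x ⬝ᵥ x := by
  have h1 : x ⬝ᵥ x = ∑ j, (x j)^2 := by
    simp [dotProduct, sq]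
  rw [h1]
  rcases Function.ne_iff.mp hx with ⟨j0, hj0⟩
  have h2 : (0:ℝ) < (x j0)^2 := lt_of_le_of_ne (sq_nonneg _) (Ne.symm (pow_ne_zero 2 hj0))
  have h3 : (x j0)^2 ≤ ∑ j, (x j)^2 :=
    Finset.single_le_sum (f := fun j => (x j)^2) (fun j _ => sq_nonneg _) (Finset.mem_univ j0)
  linarith

lemma exists_eig_ge (n : ℕ) (hn : 1 ≤ n) (M : Matrix (Fin n) (Fin n) ℝ) (hM : M.IsHermitian)
    (x : Fin n → ℝ) (hx : x ≠ 0) :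
    ∃ (μ : ℝ) (w : Fin n → ℝ), w ≠ 0 ∧ M *ᵥ w = μ • w ∧ (M *ᵥ x) ⬝ᵥ x ≤ μ * (x ⬝ᵥ x) := by
  haveI : NeZero n := ⟨by omega⟩
  haveI : Nontrivial (EuclideanSpace ℝ (Fin n)) := by
    refine ⟨(WithLp.equiv 2 _).symm x, 0, ?_⟩
    intro h
    apply hx
    have := congrArg (WithLp.equiv 2 (Fin n → ℝ)) h
    simpa using this
  set T := Matrix.toEuclideanLin M with hTdef
  have hT : T.IsSymmetric := Matrix.isHermitian_iff_isSymmetric.mp hM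
  have hev := hT.hasEigenvalue_iSup_of_finiteDimensional
  set μ : ℝ := ⨆ z : {z : EuclideanSpace ℝ (Fin n) // z ≠ 0},
      RCLike.re (inner ℝ (T z) (z : EuclideanSpace ℝ (Fin n)) : ℝ) /
        ‖(z : EuclideanSpace ℝ (Fin n))‖^2 with hμdef
  have hev' : Module.End.HasEigenvalue T μ := by
    exact hev
  obtain ⟨w, hwmem, hw0⟩ := Submodule.exists_mem_ne_zero_of_ne_bot hev'
  rw [Module.End.mem_eigenspace_iff] at hwmem
  -- translate the eigen equation to mulVec
  have hweq : M *ᵥ (WithLp.equiv 2 (Fin n → ℝ)) w = μ • (WithLp.equiv 2 (Fin n → ℝ)) w := by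
    have h1 := congrArg (WithLp.equiv 2 (Fin n → ℝ)) hwmem
    rw [Matrix.toEuclideanLin_apply] at h1
    simpa using h1
  refine ⟨μ, (WithLp.equiv 2 (Fin n → ℝ)) w, ?_, hweq, ?_⟩
  · intro h
    apply hw0
    have := congrArg (WithLp.equiv 2 (Fin n → ℝ)).symm h
    simpa using this
  -- Rayleigh bound at x
  have hxx : 0 < x ⬝ᵥ x := dotProduct_self_pos hx
  set xe : EuclideanSpace ℝ (Fin n) := (WithLp.equiv 2 (Fin n → ℝ)).symm x with hxedef
  have hxe0 : xe ≠ 0 := by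
    intro h
    apply hx
    have := congrArg (WithLp.equiv 2 (Fin n → ℝ)) h
    simpa [hxedef] using this
  have hTxe : (inner ℝ (T xe) xe : ℝ) = (M *ᵥ x) ⬝ᵥ x := by
    rw [hTdef, Matrix.toEuclideanLin_apply]
    simp only [PiLp.inner_apply, RCLike.inner_apply]
    simp [hxedef, WithLp.equiv_symm_apply, PiLp.toLp_apply, Equiv.apply_symm_apply, dotProduct, mul_comm]
  have hnxe : ‖xe‖^2 = x ⬝ᵥ x := by
    rw [← real_inner_self_eq_norm_sq]
    simp only [PiLp.inner_apply, RCLike.inner_apply]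
    simp [hxedef, WithLp.equiv_symm_apply, PiLp.toLp_apply, dotProduct]
  -- boundedness of the Rayleigh quotient
  set L := LinearMap.toContinuousLinearMap T with hLdef
  have hbdd : BddAbove (Set.range fun z : {z : EuclideanSpace ℝ (Fin n) // z ≠ 0} =>
      RCLike.re (inner ℝ (T z) (z : EuclideanSpace ℝ (Fin n)) : ℝ) /
        ‖(z : EuclideanSpace ℝ (Fin n))‖^2) := by
    refine ⟨‖L‖, ?_⟩
    rintro r ⟨z, rfl⟩
    have hz : (0:ℝ) < ‖(z : EuclideanSpace ℝ (Fin n))‖ := by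
      rw [norm_pos_iff]; exact z.2
    have h1 : RCLike.re (inner ℝ (T z) (z : EuclideanSpace ℝ (Fin n)) : ℝ)
        ≤ ‖T (z : EuclideanSpace ℝ (Fin n))‖ * ‖(z : EuclideanSpace ℝ (Fin n))‖ := by
      have := abs_real_inner_le_norm (T (z : EuclideanSpace ℝ (Fin n))) (z : EuclideanSpace ℝ (Fin n))
      have h2 : RCLike.re (inner ℝ (T z) (z : EuclideanSpace ℝ (Fin n)) : ℝ)
          = (inner ℝ (T z) (z : EuclideanSpace ℝ (Fin n)) : ℝ) := rfl
      rw [h2]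
      exact le_trans (le_abs_self _) this
    have h3 : ‖T (z : EuclideanSpace ℝ (Fin n))‖ ≤ ‖L‖ * ‖(z : EuclideanSpace ℝ (Fin n))‖ :=
      L.le_opNorm _
    rw [div_le_iff₀ (by positivity)]
    nlinarith [norm_nonneg (T (z : EuclideanSpace ℝ (Fin n))), norm_nonneg (z : EuclideanSpace ℝ (Fin n)), norm_nonneg L]
  have hray : RCLike.re (inner ℝ (T xe) xe : ℝ) / ‖xe‖^2 ≤ μ := by
    rw [hμdef]
    exact le_ciSup hbdd ⟨xe, hxe0⟩
  have hre : RCLike.re (inner ℝ (T xe) xe : ℝ) = (M *ᵥ x) ⬝ᵥ x := hTxe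
  rw [hre, hnxe] at hray
  calc (M *ᵥ x) ⬝ᵥ x = ((M *ᵥ x) ⬝ᵥ x / (x ⬝ᵥ x)) * (x ⬝ᵥ x) := by
        field_simp
    _ ≤ μ * (x ⬝ᵥ x) := mul_le_mul_of_nonneg_right hray (le_of_lt hxx)

lemma McM_apply (n : ℕ) (c : ℝ) (j j' : Fin n) :
    McM n c j j' = (if j = j' then 2*(j.val:ℝ) else 0) + c * Emat n j j' := by
  unfold McM Dmat
  simp only [Matrix.add_apply, Matrix.smul_apply, Matrix.diagonal_apply, smul_eq_mul]
  split_ifs <;> push_cast <;> ring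

lemma McM_isHermitian (n : ℕ) (c : ℝ) : (McM n c).IsHermitian := by
  unfold Matrix.IsHermitian
  ext j j'
  rw [Matrix.conjTranspose_apply]
  rw [McM_apply, McM_apply, Emat_symm n j' j]
  have : star (((if j' = j then 2*(j'.val:ℝ) else 0) + c * Emat n j j'))
      = ((if j' = j then 2*(j'.val:ℝ) else 0) + c * Emat n j j') := rfl
  rw [this]
  by_cases h : j = j'
  · subst h; simp
  · rw [if_neg h, if_neg (Ne.symm h)]

lemma sum_mul_two_supp (n : ℕ) (a b : Fin n) (hab : a ≠ b) (t : ℝ) (f : Fin n → ℝ) :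
    ∑ j, f j * (if j = a then 1 else if j = b then t else 0) = f a + t * f b := by
  have hpt : ∀ j : Fin n, f j * (if j = a then 1 else if j = b then t else 0)
      = (if j = a then f j else 0) + (if j = b then t * f j else 0) := by
    intro j
    by_cases h1 : j = a
    · subst h1
      rw [if_pos rfl, if_pos rfl, if_neg hab]
      ring
    · rw [if_neg h1, if_neg h1]
      by_cases h2 : j = b
      · rw [if_pos h2, if_pos h2]; ring
      · rw [if_neg h2, if_neg h2]; ring
  calc ∑ j, f j * (if j = a then 1 else if j = b then t else 0)
      = ∑ j, ((if j = a then f j else 0) + (if j = b then t * f j else 0)) :=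
        Finset.sum_congr rfl fun j _ => hpt j
    _ = f a + t * f b := by
        rw [Finset.sum_add_distrib, Finset.sum_ite_eq' Finset.univ a f,
          Finset.sum_ite_eq' Finset.univ b (fun j => t * f j)]
        simp

lemma small_main (n : ℕ) (c : ℝ) (hn : 2 ≤ n) (hc2 : |c| ≤ 2) (hc0 : c ≠ 0)
    (hcs : c = -2 ∨ |c| < 2) :
    ∃ (μ : ℝ) (w : Fin n → ℝ), w ≠ 0 ∧ McM n c *ᵥ w = μ • w ∧
      2*(n:ℝ) - 2 < μ ∧ μ < 2*(n:ℝ) := by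
  have hnR : (2:ℝ) ≤ (n:ℝ) := by exact_mod_cast hn
  set a : Fin n := ⟨n-1, by omega⟩ with hadef
  set b : Fin n := ⟨0, by omega⟩ with hbdef
  have hab : a ≠ b := by
    intro h
    rw [hadef, hbdef, Fin.mk.injEq] at h
    omega
  set t : ℝ := c / (2*(n:ℝ)) with htdef
  have hnne : (2*(n:ℝ)) ≠ 0 := by positivity
  have ht : 2*(n:ℝ)*t = c := by
    rw [htdef]; field_simp
  set x : Fin n → ℝ := fun j => if j = a then 1 else if j = b then t else 0 with hxdef
  have hx0 : x ≠ 0 := by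
    intro h
    have := congrFun h a
    rw [hxdef] at this
    simp at this
  obtain ⟨μ, w, hw0, heig, hge⟩ := exists_eig_ge n (by omega) (McM n c) (McM_isHermitian n c) x hx0
  refine ⟨μ, w, hw0, heig, ?_, eig_lt n c (by omega) hc2 hcs w μ hw0 heig⟩
  -- entries
  have hEaa : Emat n a a = 0 := by
    rw [Emat_apply, if_neg (by rw [hadef]; simp; omega)]
  have hEab : Emat n a b = 1 := by
    rw [Emat_apply, if_pos (by rw [hadef, hbdef]; simp; omega)]
  have hEba : Emat n b a = 1 := by rw [Emat_symm]; exact hEab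
  have hEbb : Emat n b b = 1 := by
    rw [Emat_apply, if_pos (by rw [hbdef]; simp; omega)]
  have haval : ((a.val : ℕ) : ℝ) = (n:ℝ) - 1 := by
    rw [hadef]
    simp only [Fin.val_mk]
    have : ((n - 1 : ℕ) : ℝ) = (n:ℝ) - 1 := by
      push_cast [Nat.cast_sub (by omega : 1 ≤ n)]
      ring
    exact this
  have hMaa : McM n c a a = 2*((n:ℝ)-1) := by
    rw [McM_apply, if_pos rfl, hEaa, haval]; ring
  have hMab : McM n c a b = c := by
    rw [McM_apply, if_neg hab, hEab]; ring
  have hMba : McM n c b a = c := by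
    rw [McM_apply, if_neg (Ne.symm hab), hEba]; ring
  have hMbb : McM n c b b = c := by
    rw [McM_apply, if_pos rfl, hEbb, hbdef]; simp
  -- the vector sums
  have hxx : x ⬝ᵥ x = 1 + t*t := by
    unfold dotProduct
    have := sum_mul_two_supp n a b hab t x
    rw [hxdef] at this ⊢
    rw [this]
    simp [if_neg (Ne.symm hab), hab]
  have hMv : ∀ j : Fin n, (McM n c *ᵥ x) j = McM n c j a + t * McM n c j b := by
    intro j
    unfold Matrix.mulVec dotProduct
    exact sum_mul_two_supp n a b hab t (fun j' => McM n c j j')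
  have hquad : (McM n c *ᵥ x) ⬝ᵥ x = 2*((n:ℝ)-1) + t*c + (t*c + t*(t*c)) := by
    unfold dotProduct
    rw [show ∑ j, (McM n c *ᵥ x) j * x j
        = (McM n c *ᵥ x) a + t * (McM n c *ᵥ x) b from
      sum_mul_two_supp n a b hab t (fun j => (McM n c *ᵥ x) j)]
    rw [hMv a, hMv b, hMaa, hMab, hMba, hMbb]
    ring
  -- strict inequality
  have htsq : 0 < t^2 := by
    have ht0 : t ≠ 0 := by
      intro h
      rw [h] at ht
      simp at ht
      exact hc0 ht.symm
    exact lt_of_le_of_ne (sq_nonneg _) (Ne.symm (pow_ne_zero 2 ht0))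
  have hc2' : -2 ≤ c := (abs_le.mp hc2).1
  have htc : t * c = 2*(n:ℝ)*t^2 := by rw [← ht]; ring
  have h3 : -2*t^2 ≤ t^2*c := by nlinarith [sq_nonneg t]
  have hkey : (2*(n:ℝ) - 2) * (1 + t*t) < 2*((n:ℝ)-1) + t*c + (t*c + t*(t*c)) := by
    nlinarith [htsq, htc, h3, hnR]
  have hxxpos : 0 < x ⬝ᵥ x := dotProduct_self_pos hx0
  have : (2*(n:ℝ) - 2) * (x ⬝ᵥ x) < μ * (x ⬝ᵥ x) := by
    rw [hxx] at hxxpos ⊢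
    calc (2*(n:ℝ) - 2) * (1 + t*t) < 2*((n:ℝ)-1) + t*c + (t*c + t*(t*c)) := hkey
      _ = (McM n c *ᵥ x) ⬝ᵥ x := hquad.symm
      _ ≤ μ * (x ⬝ᵥ x) := hge
      _ = μ * (1 + t*t) := by rw [hxx]
  exact lt_of_mul_lt_mul_right (by linarith [this]) (le_of_lt hxxpos) |>.trans_le (le_refl μ) |> id


end SmallMatrix


section GraphSide
open Matrix Finset

variable {m n : ℕ}

def zeroF (n : ℕ) (hn : 1 ≤ n) : Fin n := ⟨0, hn⟩

noncomputable def posOf {m n : ℕ} (hn : 1 ≤ n) (σ : ColouredPerm m n) : Fin n :=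
  σ.2⁻¹ (zeroF n hn)

noncomputable def colOf {m n : ℕ} (hn : 1 ≤ n) (σ : ColouredPerm m n) : ZMod m :=
  σ.1 (posOf hn σ)

lemma flipPerm_apply (n k : ℕ) (t : Fin n) : flipPerm n k t = flipFun n k t := rfl

lemma flipPerm_inv (n k : ℕ) : (flipPerm n k)⁻¹ = flipPerm n k := rfl

lemma flipFun_lt {n k : ℕ} {t : Fin n} (h : t.val < k) : (flipFun n k t).val < k := by
  unfold flipFun
  by_cases hc : t.val < k ∧ k ≤ n
  · rw [dif_pos hc]; simp only [Fin.val_mk]; omega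
  · rw [dif_neg hc]; exact h

lemma flipFun_of_ge {n k : ℕ} {t : Fin n} (h : ¬ t.val < k) : flipFun n k t = t := by
  unfold flipFun
  rw [dif_neg]
  tauto

lemma flipFun_of_lt {n k : ℕ} {t : Fin n} (h1 : t.val < k) (h2 : k ≤ n) :
    flipFun n k t = ⟨k - 1 - t.val, by omega⟩ := by
  unfold flipFun
  rw [dif_pos ⟨h1, h2⟩]

lemma flipFun_zero {n k : ℕ} (hk : 1 ≤ k) (hk2 : k ≤ n) :
    flipFun n k (zeroF n (le_trans hk hk2)) = ⟨k - 1, by omega⟩ := by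
  unfold flipFun zeroF
  rw [dif_pos (show (0:ℕ) < k ∧ k ≤ n from ⟨hk, hk2⟩)]
  apply Fin.ext
  show k - 1 - (0:ℕ) = k - 1
  omega

lemma prefixRev_fst_lt {k : ℕ} (ε : ZMod m) (σ : ColouredPerm m n) {t : Fin n}
    (h : t.val < k) : (prefixRev m n k ε σ).1 t = σ.1 (flipFun n k t) + ε := by
  unfold prefixRev
  simp only [if_pos h]
  rfl

lemma prefixRev_fst_ge {k : ℕ} (ε : ZMod m) (σ : ColouredPerm m n) {t : Fin n}
    (h : ¬ t.val < k) : (prefixRev m n k ε σ).1 t = σ.1 t := by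
  unfold prefixRev
  simp only [if_neg h]

lemma prefixRev_snd (k : ℕ) (ε : ZMod m) (σ : ColouredPerm m n) :
    (prefixRev m n k ε σ).2 = σ.2 * flipPerm n k := rfl

lemma pos_prefixRev (hn : 1 ≤ n) (k : ℕ) (ε : ZMod m) (σ : ColouredPerm m n) :
    posOf hn (prefixRev m n k ε σ) = flipFun n k (posOf hn σ) := by
  unfold posOf
  rw [prefixRev_snd, _root_.mul_inv_rev, flipPerm_inv]
  rfl

lemma col_prefixRev (hn : 1 ≤ n) (k : ℕ) (ε : ZMod m) (σ : ColouredPerm m n) :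
    colOf hn (prefixRev m n k ε σ)
      = if (posOf hn σ).val < k then colOf hn σ + ε else colOf hn σ := by
  unfold colOf
  rw [pos_prefixRev]
  by_cases h : (posOf hn σ).val < k
  · rw [if_pos h, prefixRev_fst_lt ε σ (flipFun_lt h), flipFun_involutive n k (posOf hn σ)]
  · rw [if_neg h, flipFun_of_ge h, prefixRev_fst_ge ε σ h]

lemma prefixRev_prefixRev (k : ℕ) (ε : ZMod m) (σ : ColouredPerm m n) :
    prefixRev m n k (-ε) (prefixRev m n k ε σ) = σ := by
  have hsnd : (prefixRev m n k (-ε) (prefixRev m n k ε σ)).2 = σ.2 := by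
    rw [prefixRev_snd, prefixRev_snd, mul_assoc]
    have : flipPerm n k * flipPerm n k = 1 := by
      ext t
      simp only [Equiv.Perm.mul_apply, Equiv.Perm.one_apply, flipPerm_apply]
      exact congrArg Fin.val (flipFun_involutive n k t)
    rw [this, mul_one]
  have hfst : (prefixRev m n k (-ε) (prefixRev m n k ε σ)).1 = σ.1 := by
    funext t
    by_cases ht : t.val < k
    · rw [prefixRev_fst_lt (-ε) _ ht, prefixRev_fst_lt ε σ (flipFun_lt ht),
        flipFun_involutive n k t]
      ring
    · rw [prefixRev_fst_ge (-ε) _ ht, prefixRev_fst_ge ε σ ht]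
  exact Prod.ext hfst hsnd

lemma prefixRev_ne {k : ℕ} (hk : 1 ≤ k) (hk2 : k ≤ n) {ε : ZMod m} (hε : ε ≠ 0)
    (σ : ColouredPerm m n) : prefixRev m n k ε σ ≠ σ := by
  intro h
  have hn : 1 ≤ n := le_trans hk hk2
  have h2 : σ.2 * flipPerm n k = σ.2 := congrArg Prod.snd h
  have hflip : flipPerm n k = 1 := mul_left_cancel (h2.trans (mul_one σ.2).symm)
  have hz : flipFun n k (zeroF n hn) = zeroF n hn := by
    have := Equiv.ext_iff.mp hflip (zeroF n hn)
    simpa [flipPerm_apply] using this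
  have h1 : (prefixRev m n k ε σ).1 (zeroF n hn) = σ.1 (zeroF n hn) :=
    congrFun (congrArg Prod.fst h) (zeroF n hn)
  rw [prefixRev_fst_lt ε σ (show (zeroF n hn).val < k from hk), hz] at h1
  exact hε (by rwa [add_eq_left] at h1)

lemma prefixRev_inj {k k' : ℕ} (hk : 1 ≤ k) (hk2 : k ≤ n) (hk' : 1 ≤ k') (hk2' : k' ≤ n)
    {ε ε' : ZMod m} (σ : ColouredPerm m n)
    (h : prefixRev m n k ε σ = prefixRev m n k' ε' σ) : k = k' ∧ ε = ε' := by
  have hn : 1 ≤ n := le_trans hk hk2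
  have h2 : σ.2 * flipPerm n k = σ.2 * flipPerm n k' := congrArg Prod.snd h
  have hflip : flipPerm n k = flipPerm n k' := mul_left_cancel h2
  have hz : flipFun n k (zeroF n hn) = flipFun n k' (zeroF n hn) := by
    have := Equiv.ext_iff.mp hflip (zeroF n hn)
    simpa [flipPerm_apply] using this
  rw [flipFun_zero hk hk2] at hz
  rw [show zeroF n (le_trans hk hk2) = zeroF n (le_trans hk' hk2') from rfl] at hz
  rw [flipFun_zero hk' hk2'] at hz
  have hkk : k = k' := by
    have := congrArg Fin.val hz
    simp only [Fin.val_mk] at this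
    omega
  subst hkk
  refine ⟨rfl, ?_⟩
  have h1 : (prefixRev m n k ε σ).1 (zeroF n hn) = (prefixRev m n k ε' σ).1 (zeroF n hn) :=
    congrFun (congrArg Prod.fst h) (zeroF n hn)
  rw [prefixRev_fst_lt ε σ (show (zeroF n hn).val < k from hk),
    prefixRev_fst_lt ε' σ (show (zeroF n hn).val < k from hk)] at h1
  exact add_left_cancel h1

lemma one_ne_zero_zmod (hm : 3 ≤ m) : (1 : ZMod m) ≠ 0 := by
  haveI : NeZero m := ⟨by omega⟩
  haveI : Fact (1 < m) := ⟨by omega⟩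
  exact one_ne_zero

lemma neg_one_ne_zero_zmod (hm : 3 ≤ m) : (-1 : ZMod m) ≠ 0 := by
  intro h
  exact one_ne_zero_zmod hm (neg_eq_zero.mp h)

lemma one_ne_neg_one_zmod (hm : 3 ≤ m) : (1 : ZMod m) ≠ -1 := by
  haveI : NeZero m := ⟨by omega⟩
  intro h
  have h2' : (1 : ZMod m) + 1 = 0 := by
    nth_rewrite 2 [h]
    ring
  have h2 : ((2 : ℕ) : ZMod m) = 0 := by
    push_cast
    rw [show (2 : ZMod m) = 1 + 1 from by norm_num]
    exact h2'
  have := (ZMod.natCast_eq_zero_iff 2 m).mp h2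
  have := Nat.le_of_dvd (by norm_num) this
  omega

lemma adj_iff (hm : 3 ≤ m) (σ τ : ColouredPerm m n) :
    pancakeAdj m n σ τ ↔ ∃ k, (1 ≤ k ∧ k ≤ n) ∧ ∃ ε : ZMod m, (ε = 1 ∨ ε = -1) ∧
      τ = prefixRev m n k ε σ := by
  constructor
  · rintro ⟨hne, k, hk1, hk2, ε, hε, hcase | hcase⟩
    · exact ⟨k, ⟨hk1, hk2⟩, ε, hε, hcase⟩
    · refine ⟨k, ⟨hk1, hk2⟩, -ε, ?_, ?_⟩
      · rcases hε with h | h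
        · right; rw [h]
        · left; rw [h, neg_neg]
      · rw [hcase, prefixRev_prefixRev]
  · rintro ⟨k, ⟨hk1, hk2⟩, ε, hε, rfl⟩
    have hε0 : ε ≠ 0 := by
      rcases hε with h | h
      · rw [h]; exact one_ne_zero_zmod hm
      · rw [h]; exact neg_one_ne_zero_zmod hm
    exact ⟨(prefixRev_ne hk1 hk2 hε0 σ).symm, k, hk1, hk2, ε, hε, Or.inl rfl⟩

lemma sum_neighbors [NeZero m] (hm : 3 ≤ m) (hn : 1 ≤ n) (σ : ColouredPerm m n)
    (g : ColouredPerm m n → ℝ) :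
    ∑ τ, pancakeAdjMatrix m n σ τ * g τ
      = ∑ k ∈ Finset.Icc 1 n, ∑ ε ∈ ({1, -1} : Finset (ZMod m)),
          g (prefixRev m n k ε σ) := by
  classical
  set s : Finset (ℕ × ZMod m) := (Finset.Icc 1 n) ×ˢ ({1, -1} : Finset (ZMod m)) with hsdef
  have himg : Finset.univ.filter (fun τ => pancakeAdj m n σ τ)
      = s.image (fun p => prefixRev m n p.1 p.2 σ) := by
    ext τ
    simp only [Finset.mem_filter, Finset.mem_univ, true_and, Finset.mem_image, hsdef,
      Finset.mem_product, Finset.mem_Icc, Finset.mem_insert, Finset.mem_singleton]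
    rw [adj_iff hm]
    constructor
    · rintro ⟨k, hk, ε, hε, rfl⟩
      exact ⟨(k, ε), ⟨hk, hε⟩, rfl⟩
    · rintro ⟨⟨k, ε⟩, ⟨hk, hε⟩, rfl⟩
      exact ⟨k, hk, ε, hε, rfl⟩
  have hinj : ∀ p ∈ s, ∀ q ∈ s,
      prefixRev m n p.1 p.2 σ = prefixRev m n q.1 q.2 σ → p = q := by
    rintro ⟨k, ε⟩ hp ⟨k', ε'⟩ hq h
    rw [hsdef, Finset.mem_product, Finset.mem_Icc] at hp hq
    obtain ⟨hk, he⟩ := prefixRev_inj hp.1.1 hp.1.2 hq.1.1 hq.1.2 σ h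
    rw [Prod.mk.injEq]
    exact ⟨hk, he⟩
  calc ∑ τ, pancakeAdjMatrix m n σ τ * g τ
      = ∑ τ, (if pancakeAdj m n σ τ then g τ else 0) := by
        refine Finset.sum_congr rfl fun τ _ => ?_
        by_cases h : pancakeAdj m n σ τ
        · rw [if_pos h]
          show (if pancakeAdj m n σ τ then (1:ℝ) else 0) * g τ = g τ
          rw [if_pos h, one_mul]
        · rw [if_neg h]
          show (if pancakeAdj m n σ τ then (1:ℝ) else 0) * g τ = 0
          rw [if_neg h, zero_mul]
    _ = ∑ τ ∈ Finset.univ.filter (fun τ => pancakeAdj m n σ τ), g τ :=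
        (Finset.sum_filter _ _).symm
    _ = ∑ p ∈ s, g (prefixRev m n p.1 p.2 σ) := by
        rw [himg, Finset.sum_image hinj]
    _ = ∑ k ∈ Finset.Icc 1 n, ∑ ε ∈ ({1, -1} : Finset (ZMod m)),
          g (prefixRev m n k ε σ) := by rw [hsdef, Finset.sum_product]

lemma sum_Ioc_flip (j : Fin n) (h : Fin n → ℝ) :
    ∑ k ∈ Finset.Ioc j.val n, h (flipFun n k j) = ∑ j', Emat n j j' * h j' := by
  have hE : ∑ j', Emat n j j' * h j'
      = ∑ j' ∈ Finset.univ.filter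
          (fun j' : Fin n => (j.val + 1) + (j'.val + 1) ≤ n + 1), h j' := by
    rw [Finset.sum_filter]
    refine Finset.sum_congr rfl fun j' _ => ?_
    rw [Emat_apply]
    split_ifs <;> ring
  rw [hE]
  refine Finset.sum_nbij' (i := fun k => flipFun n k j)
    (j := fun j' : Fin n => j.val + j'.val + 1) ?_ ?_ ?_ ?_ ?_
  · intro k hk
    rw [Finset.mem_Ioc] at hk
    rw [flipFun_of_lt hk.1 hk.2]
    simp only [Finset.mem_filter, Finset.mem_univ, true_and, Fin.val_mk]
    omega
  · intro j' hj'
    simp only [Finset.mem_filter, Finset.mem_univ, true_and] at hj'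
    rw [Finset.mem_Ioc]
    omega
  · intro k hk
    rw [Finset.mem_Ioc] at hk
    rw [flipFun_of_lt hk.1 hk.2]
    simp only [Fin.val_mk]
    omega
  · intro j' hj'
    simp only [Finset.mem_filter, Finset.mem_univ, true_and] at hj'
    rw [flipFun_of_lt (by omega : j.val < j.val + j'.val + 1) (by omega : j.val + j'.val + 1 ≤ n)]
    apply Fin.ext
    simp only [Fin.val_mk]
    omega
  · intro k _
    rfl

lemma lift_formula [NeZero m] (hm : 3 ≤ m) (hn : 1 ≤ n) (g : ZMod m × Fin n → ℝ)
    (σ : ColouredPerm m n) :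
    ∑ τ, pancakeAdjMatrix m n σ τ * g (colOf hn τ, posOf hn τ)
      = 2 * ((posOf hn σ).val : ℝ) * g (colOf hn σ, posOf hn σ)
        + ∑ j', Emat n (posOf hn σ) j' *
            (g (colOf hn σ + 1, j') + g (colOf hn σ + (-1), j')) := by
  classical
  rw [sum_neighbors hm hn]
  set i := colOf hn σ with hidef
  set j := posOf hn σ with hjdef
  have hpairne : (1 : ZMod m) ≠ -1 := one_ne_neg_one_zmod hm
  have hicc : Finset.Icc 1 n = Finset.Ioc 0 n := (Finset.Icc_add_one_left_eq_Ioc 0 n)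
  have hsplit : ∑ k ∈ Finset.Icc 1 n, ∑ ε ∈ ({1, -1} : Finset (ZMod m)),
        g (colOf hn (prefixRev m n k ε σ), posOf hn (prefixRev m n k ε σ))
      = ∑ k ∈ Finset.Ioc 0 j.val, ∑ ε ∈ ({1, -1} : Finset (ZMod m)),
          g (colOf hn (prefixRev m n k ε σ), posOf hn (prefixRev m n k ε σ))
        + ∑ k ∈ Finset.Ioc j.val n, ∑ ε ∈ ({1, -1} : Finset (ZMod m)),
            g (colOf hn (prefixRev m n k ε σ), posOf hn (prefixRev m n k ε σ)) := by
    rw [hicc, Finset.sum_Ioc_consecutive _ (Nat.zero_le j.val) (le_of_lt j.isLt)]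
  rw [hsplit]
  have hfirst : ∑ k ∈ Finset.Ioc 0 j.val, ∑ ε ∈ ({1, -1} : Finset (ZMod m)),
        g (colOf hn (prefixRev m n k ε σ), posOf hn (prefixRev m n k ε σ))
      = 2 * (j.val : ℝ) * g (i, j) := by
    have hterm : ∀ k ∈ Finset.Ioc 0 j.val, ∑ ε ∈ ({1, -1} : Finset (ZMod m)),
        g (colOf hn (prefixRev m n k ε σ), posOf hn (prefixRev m n k ε σ))
        = 2 * g (i, j) := by
      intro k hk
      rw [Finset.mem_Ioc] at hk
      have hnk : ¬ j.val < k := by omega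
      have hpos : ∀ ε : ZMod m, posOf hn (prefixRev m n k ε σ) = j := by
        intro ε
        rw [pos_prefixRev, ← hjdef, flipFun_of_ge hnk]
      have hcol : ∀ ε : ZMod m, colOf hn (prefixRev m n k ε σ) = i := by
        intro ε
        rw [col_prefixRev, ← hjdef, if_neg hnk, hidef]
      rw [Finset.sum_pair hpairne, hpos, hcol, hpos, hcol]
      ring
    rw [Finset.sum_congr rfl hterm, Finset.sum_const, Nat.card_Ioc]
    simp only [Nat.sub_zero, nsmul_eq_mul]
    ring
  have hsecond : ∑ k ∈ Finset.Ioc j.val n, ∑ ε ∈ ({1, -1} : Finset (ZMod m)),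
        g (colOf hn (prefixRev m n k ε σ), posOf hn (prefixRev m n k ε σ))
      = ∑ j', Emat n j j' * (g (i + 1, j') + g (i + (-1), j')) := by
    have hterm : ∀ k ∈ Finset.Ioc j.val n, ∑ ε ∈ ({1, -1} : Finset (ZMod m)),
        g (colOf hn (prefixRev m n k ε σ), posOf hn (prefixRev m n k ε σ))
        = (fun t => g (i + 1, t) + g (i + (-1), t)) (flipFun n k j) := by
      intro k hk
      rw [Finset.mem_Ioc] at hk
      have hlt : j.val < k := hk.1
      have hpos : ∀ ε : ZMod m, posOf hn (prefixRev m n k ε σ) = flipFun n k j := by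
        intro ε
        rw [pos_prefixRev, ← hjdef]
      have hcol : ∀ ε : ZMod m, colOf hn (prefixRev m n k ε σ) = i + ε := by
        intro ε
        rw [col_prefixRev, ← hjdef, if_pos hlt, hidef]
      rw [Finset.sum_pair hpairne, hpos, hcol, hpos, hcol]
    rw [Finset.sum_congr rfl hterm, sum_Ioc_flip j (fun t => g (i + 1, t) + g (i + (-1), t))]
  rw [hfirst, hsecond]

lemma rowE_exact (j : Fin n) : ∑ j', Emat n j j' = (n : ℝ) - j.val := by
  have h := sum_Ioc_flip j (fun _ => (1:ℝ))
  rw [Finset.sum_const, Nat.card_Ioc] at h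
  simp only [nsmul_eq_mul, mul_one] at h
  rw [← h]
  have hj : j.val ≤ n := le_of_lt j.isLt
  push_cast [Nat.cast_sub hj]
  ring

end GraphSide


section TrigAndRoots
open Matrix

lemma cos_mod (m ℓ : ℕ) (hm : 0 < m) (a : ℕ) :
    Real.cos ((2*Real.pi*ℓ/m) * ((a % m : ℕ) : ℝ)) = Real.cos ((2*Real.pi*ℓ/m) * (a : ℝ)) := by
  have hm0 : (m:ℝ) ≠ 0 := Nat.cast_ne_zero.mpr (by omega)
  have key : (2*Real.pi*ℓ/m) * (a:ℝ)
      = (2*Real.pi*ℓ/m) * ((a % m : ℕ):ℝ) + ((ℓ*(a/m) : ℕ) : ℤ) * (2*Real.pi) := by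
    have ha : (a:ℝ) = ((a % m : ℕ):ℝ) + (m:ℝ) * ((a/m : ℕ):ℝ) := by
      exact_mod_cast (Nat.mod_add_div a m).symm
    have hq : (((ℓ*(a/m) : ℕ) : ℤ) : ℝ) = (ℓ:ℝ) * ((a/m : ℕ):ℝ) := by
      rw [Int.cast_natCast, Nat.cast_mul]
    rw [ha, hq]
    have hθm : (2*Real.pi*ℓ/m) * (m:ℝ) = 2*Real.pi*ℓ := by field_simp
    linear_combination ((a/m : ℕ):ℝ) * hθm
  rw [key, Real.cos_add_int_mul_two_pi]

lemma co_rec (m ℓ : ℕ) (hm : 3 ≤ m) (i : ZMod m) :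
    Real.cos ((2*Real.pi*ℓ/m) * (((i + 1 : ZMod m)).val : ℝ))
      + Real.cos ((2*Real.pi*ℓ/m) * (((i + (-1) : ZMod m)).val : ℝ))
      = (2 * Real.cos (2*Real.pi*ℓ/m)) * Real.cos ((2*Real.pi*ℓ/m) * (i.val : ℝ)) := by
  haveI : NeZero m := ⟨by omega⟩
  haveI : Fact (1 < m) := ⟨by omega⟩
  set θ := 2*Real.pi*ℓ/m with hθ
  have hm0 : (m:ℝ) ≠ 0 := Nat.cast_ne_zero.mpr (by omega)
  have hv1 : (i + 1 : ZMod m).val = (i.val + 1) % m := by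
    rw [ZMod.val_add, ZMod.val_one]
  have hneg : (-1 : ZMod m) = ((m - 1 : ℕ) : ZMod m) := by
    have hm1 : ((m - 1 : ℕ) : ZMod m) + 1 = 0 := by
      rw [show ((m-1:ℕ):ZMod m) + 1 = ((m-1+1 : ℕ) : ZMod m) from by push_cast; ring,
        show m - 1 + 1 = m from by omega, ZMod.natCast_self]
    exact (eq_neg_of_add_eq_zero_left hm1).symm
  have hv2 : (i + (-1) : ZMod m).val = (i.val + (m - 1)) % m := by
    rw [hneg, ZMod.val_add, ZMod.val_natCast,
      Nat.mod_eq_of_lt (show m - 1 < m from by omega)]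
  have hc1 : Real.cos (θ * (((i + 1 : ZMod m)).val : ℝ))
      = Real.cos (θ * (i.val:ℝ) + θ) := by
    rw [hv1, hθ, cos_mod m ℓ (by omega)]
    congr 1
    push_cast
    ring
  have hc2 : Real.cos (θ * (((i + (-1) : ZMod m)).val : ℝ))
      = Real.cos (θ * (i.val:ℝ) - θ) := by
    rw [hv2, hθ, cos_mod m ℓ (by omega)]
    have harg : (2*Real.pi*ℓ/m) * (((i.val + (m - 1) : ℕ)) : ℝ)
        = ((2*Real.pi*ℓ/m) * (i.val:ℝ) - (2*Real.pi*ℓ/m)) + (ℓ : ℤ) * (2*Real.pi) := by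
      have hcast : (((i.val + (m - 1) : ℕ)) : ℝ) = (i.val:ℝ) + (m:ℝ) - 1 := by
        push_cast [Nat.cast_sub (by omega : 1 ≤ m)]
        ring
      rw [hcast]
      field_simp
      push_cast
      ring
    rw [harg, Real.cos_add_int_mul_two_pi]
  rw [hc1, hc2, Real.cos_add, Real.cos_sub]
  ring

lemma charpoly_eval (V : Type*) [Fintype V] [DecidableEq V] (A : Matrix V V ℝ) (μ : ℝ) :
    A.charpoly.eval μ = (μ • (1 : Matrix V V ℝ) - A).det := by
  have h := RingHom.map_det (Polynomial.evalRingHom μ) A.charmatrix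
  have h1 : A.charpoly.eval μ = (Polynomial.evalRingHom μ) A.charmatrix.det := rfl
  rw [h1, h]
  congr 1
  ext i k
  simp only [RingHom.mapMatrix_apply, Matrix.map_apply, Matrix.charmatrix_apply,
    Polynomial.coe_evalRingHom, Polynomial.eval_sub, Polynomial.eval_C,
    Matrix.sub_apply, Matrix.smul_apply, Matrix.one_apply, Matrix.diagonal_apply,
    smul_eq_mul]
  split_ifs with hik <;> simp

lemma eig_iff_root (V : Type*) [Fintype V] [DecidableEq V] (A : Matrix V V ℝ) (μ : ℝ) :
    μ ∈ A.charpoly.roots ↔ ∃ v, v ≠ 0 ∧ A *ᵥ v = μ • v := by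
  rw [Polynomial.mem_roots (A.charpoly_monic.ne_zero), Polynomial.IsRoot,
    charpoly_eval, ← Matrix.exists_mulVec_eq_zero_iff]
  constructor
  · rintro ⟨v, hv0, hv⟩
    refine ⟨v, hv0, ?_⟩
    rw [Matrix.sub_mulVec, Matrix.smul_mulVec, Matrix.one_mulVec, sub_eq_zero] at hv
    exact hv.symm
  · rintro ⟨v, hv0, hv⟩
    refine ⟨v, hv0, ?_⟩
    rw [Matrix.sub_mulVec, Matrix.smul_mulVec, Matrix.one_mulVec, sub_eq_zero, hv]

lemma sorted_gap (R : Multiset ℝ) (a b B : ℝ) (ha : a ∈ R) (hb : b ∈ R) (hab : a ≠ b)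
    (hB : ∀ r ∈ R, r ≤ B) :
    ((R.sort (· ≤ ·)).reverse).getD 0 0 - ((R.sort (· ≤ ·)).reverse).getD 1 0
      ≤ B - min a b := by
  classical
  set l := R.sort (· ≤ ·) with hl
  have hsort : l.SortedLE := (Multiset.pairwise_sort _ _).sortedLE
  have hmema : a ∈ l := (Multiset.mem_sort _).mpr ha
  have hmemb : b ∈ l := (Multiset.mem_sort _).mpr hb
  obtain ⟨ia, hia⟩ := List.mem_iff_get.mp hmema
  obtain ⟨ib, hib⟩ := List.mem_iff_get.mp hmemb
  have hiab : ia ≠ ib := by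
    intro h
    apply hab
    rw [← hia, ← hib, h]
  have hN2 : 2 ≤ l.length := by
    by_contra h
    push_neg at h
    apply hiab
    apply Fin.ext
    have h1 := ia.isLt
    have h2 := ib.isLt
    omega
  have hrevlen : l.reverse.length = l.length := by simp
  have h0 : (l.reverse).getD 0 0 = l[l.length - 1]'(by omega) := by
    rw [List.getD_eq_getElem l.reverse 0 (show (0:ℕ) < l.reverse.length by omega),
      List.getElem_reverse]
    simp only [Nat.sub_zero]
  have h1 : (l.reverse).getD 1 0 = l[l.length - 2]'(by omega) := by
    rw [List.getD_eq_getElem l.reverse 0 (show (1:ℕ) < l.reverse.length by omega),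
      List.getElem_reverse]
    congr 1 <;> omega
  have hb1 : l[l.length - 1]'(by omega) ≤ B := by
    apply hB
    rw [← Multiset.mem_sort (· ≤ ·) (s := R)]
    exact List.getElem_mem _
  have hb2 : min a b ≤ l[l.length - 2]'(by omega) := by
    by_contra hlt
    push_neg at hlt
    have key : ∀ iv : Fin l.length, (l.get iv = a ∨ l.get iv = b) → iv.val = l.length - 1 := by
      intro iv hiv
      by_contra hne
      have hle : iv.val ≤ l.length - 2 := by
        have := iv.isLt
        omega
      have hmono : l.get iv ≤ l[l.length - 2]'(by omega) := by
        have h := hsort.monotone_get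
          (show iv ≤ (⟨l.length - 2, by omega⟩ : Fin l.length) by rw [Fin.le_def]; exact hle)
        rw [List.get_eq_getElem] at h
        exact h
      have hminle : min a b ≤ l.get iv := by
        rcases hiv with h | h <;> rw [h]
        · exact min_le_left a b
        · exact min_le_right a b
      linarith
    have hA := key ia (Or.inl hia)
    have hBk := key ib (Or.inr hib)
    apply hiab
    apply Fin.ext
    omega
  rw [h0, h1]
  linarith

end TrigAndRoots

open Matrix in
/-- For all integers `m ≥ 3` and `n ≥ 2`, the spectral gap of
the generalised pancake graph satisfies `λ₁(𝒫_m(n)) − λ₂(𝒫_m(n)) < 2`. -/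
theorem pancake_spectral_gap_lt_two (m n : ℕ) (hm : 3 ≤ m) (hn : 2 ≤ n) :
    haveI : NeZero m := ⟨by omega⟩
    nthLargestEig (pancakeAdjMatrix m n) 1 - nthLargestEig (pancakeAdjMatrix m n) 2 < 2 := by
  haveI : NeZero m := ⟨by omega⟩
  classical
  have hn1 : 1 ≤ n := by omega
  have hnR : (2:ℝ) ≤ (n:ℝ) := by exact_mod_cast hn
  set ℓ : ℕ := if m = 4 then 2 else 1 with hldef
  set θ : ℝ := 2*Real.pi*ℓ/m with hθdef
  set c : ℝ := 2 * Real.cos θ with hcdef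
  have hc2 : |c| ≤ 2 := by
    rw [hcdef, abs_mul, abs_two]
    nlinarith [Real.abs_cos_le_one θ, abs_nonneg (Real.cos θ)]
  have hprops : c ≠ 0 ∧ (c = -2 ∨ |c| < 2) := by
    by_cases h4 : m = 4
    · have hl2 : ℓ = 2 := by rw [hldef, if_pos h4]
      have hθπ : θ = Real.pi := by
        rw [hθdef, hl2, h4]
        push_cast
        field_simp
        ring
      rw [hcdef, hθπ, Real.cos_pi]
      norm_num
    · have hl1 : ℓ = 1 := by rw [hldef, if_neg h4]
      have hθval : θ = 2*Real.pi/m := by rw [hθdef, hl1]; push_cast; ring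
      have hmR : (3:ℝ) ≤ (m:ℝ) := by exact_mod_cast hm
      have hπ := Real.pi_pos
      have hθpos : 0 < θ := by rw [hθval]; positivity
      have hθlt : θ < Real.pi := by
        rw [hθval, div_lt_iff₀ (by linarith)]
        nlinarith
      have hsin : 0 < Real.sin θ := Real.sin_pos_of_pos_of_lt_pi hθpos hθlt
      have hcos1 : |Real.cos θ| < 1 := by
        have h1 : Real.cos θ^2 < 1 := by nlinarith [Real.sin_sq_add_cos_sq θ]
        exact (sq_lt_one_iff_abs_lt_one (Real.cos θ)).mp h1
      have hcne : Real.cos θ ≠ 0 := by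
        by_cases h5 : m = 3
        · rw [hθval, h5]
          rw [show 2*Real.pi/((3:ℕ):ℝ) = Real.pi - Real.pi/3 from by push_cast; ring]
          rw [Real.cos_pi_sub, Real.cos_pi_div_three]
          norm_num
        · have hm5 : 5 ≤ m := by omega
          have hm5R : (5:ℝ) ≤ (m:ℝ) := by exact_mod_cast hm5
          have hhalf : θ < Real.pi/2 := by
            rw [hθval, div_lt_iff₀ (by linarith)]
            nlinarith
          have hcpos : 0 < Real.cos θ :=
            Real.cos_pos_of_mem_Ioo ⟨by linarith, hhalf⟩
          linarith
      constructor
      · rw [hcdef]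
        intro h
        apply hcne
        linarith
      · right
        rw [hcdef, abs_mul, abs_two]
        linarith
  obtain ⟨hc0, hcs⟩ := hprops
  obtain ⟨μ, w, hw0, heig, hμlow, hμhigh⟩ := small_main n c hn hc2 hc0 hcs
  set A := pancakeAdjMatrix m n with hAdef
  -- exact row sums 2n
  have hones : ∀ σ : ColouredPerm m n, ∑ τ, A σ τ = 2*(n:ℝ) := by
    intro σ
    have h := lift_formula hm hn1 (fun _ => (1:ℝ)) σ
    have hL : ∑ τ, A σ τ * (1:ℝ) = ∑ τ, A σ τ := by simp
    have hR : ∑ j', Emat n (posOf hn1 σ) j' * ((1:ℝ) + 1)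
        = 2*((n:ℝ) - ((posOf hn1 σ).val:ℝ)) := by
      calc ∑ j', Emat n (posOf hn1 σ) j' * ((1:ℝ) + 1)
          = (∑ j', Emat n (posOf hn1 σ) j') * 2 := by
            rw [← Finset.sum_mul]
            norm_num
        _ = ((n:ℝ) - ((posOf hn1 σ).val:ℝ)) * 2 := by rw [rowE_exact]
        _ = 2*((n:ℝ) - ((posOf hn1 σ).val:ℝ)) := by ring
    rw [← hL, h, hR]
    ring
  -- the all-ones eigenvector
  have hσd : ∃ σd : ColouredPerm m n, True := ⟨(fun _ => (0:ZMod m), 1), trivial⟩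
  obtain ⟨σd, -⟩ := hσd
  have hne0 : (fun _ : ColouredPerm m n => (1:ℝ)) ≠ 0 := by
    intro h
    have := congrFun h σd
    norm_num at this
  have h1eig : A *ᵥ (fun _ => (1:ℝ)) = (2*(n:ℝ)) • (fun _ => (1:ℝ)) := by
    funext σ
    calc (A *ᵥ fun _ => (1:ℝ)) σ = ∑ τ, A σ τ * 1 := rfl
      _ = ∑ τ, A σ τ := by simp
      _ = 2*(n:ℝ) := hones σ
      _ = ((2*(n:ℝ)) • (fun _ : ColouredPerm m n => (1:ℝ))) σ := by
          simp
  have hroot1 : (2*(n:ℝ)) ∈ A.charpoly.roots :=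
    (eig_iff_root _ A _).mpr ⟨_, hne0, h1eig⟩
  -- the twisted eigenvector
  set x2 : ColouredPerm m n → ℝ :=
    fun σ => Real.cos (θ * (((colOf hn1 σ)).val:ℝ)) * w (posOf hn1 σ) with hx2def
  have h2eig : A *ᵥ x2 = μ • x2 := by
    funext σ
    have h := lift_formula hm hn1 (fun p => Real.cos (θ * ((p.1.val : ℕ) : ℝ)) * w p.2) σ
    dsimp only at h
    have hco : ∀ j' : Fin n,
        Real.cos (θ * (((colOf hn1 σ + 1 : ZMod m)).val:ℝ)) * w j'
          + Real.cos (θ * (((colOf hn1 σ + (-1) : ZMod m)).val:ℝ)) * w j'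
        = c * Real.cos (θ * (((colOf hn1 σ)).val:ℝ)) * w j' := by
      intro j'
      have hrec := co_rec m ℓ hm (colOf hn1 σ)
      rw [← hθdef] at hrec
      calc Real.cos (θ * (((colOf hn1 σ + 1 : ZMod m)).val:ℝ)) * w j'
            + Real.cos (θ * (((colOf hn1 σ + (-1) : ZMod m)).val:ℝ)) * w j'
          = (Real.cos (θ * (((colOf hn1 σ + 1 : ZMod m)).val:ℝ))
              + Real.cos (θ * (((colOf hn1 σ + (-1) : ZMod m)).val:ℝ))) * w j' := by ring
        _ = ((2 * Real.cos θ) * Real.cos (θ * (((colOf hn1 σ)).val:ℝ))) * w j' := by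
            rw [hrec]
        _ = c * Real.cos (θ * (((colOf hn1 σ)).val:ℝ)) * w j' := by
            rw [hcdef]
    have hsum : ∑ j', Emat n (posOf hn1 σ) j' *
          (Real.cos (θ * (((colOf hn1 σ + 1 : ZMod m)).val:ℝ)) * w j'
            + Real.cos (θ * (((colOf hn1 σ + (-1) : ZMod m)).val:ℝ)) * w j')
        = c * Real.cos (θ * (((colOf hn1 σ)).val:ℝ))
            * ∑ j', Emat n (posOf hn1 σ) j' * w j' := by
      rw [Finset.mul_sum]
      refine Finset.sum_congr rfl fun j' _ => ?_
      rw [hco j']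
      ring
    calc (A *ᵥ x2) σ
        = ∑ τ, A σ τ * (Real.cos (θ * (((colOf hn1 τ)).val:ℝ)) * w (posOf hn1 τ)) := rfl
      _ = 2 * (((posOf hn1 σ)).val : ℝ)
            * (Real.cos (θ * (((colOf hn1 σ)).val:ℝ)) * w (posOf hn1 σ))
          + ∑ j', Emat n (posOf hn1 σ) j' *
              (Real.cos (θ * (((colOf hn1 σ + 1 : ZMod m)).val:ℝ)) * w j'
                + Real.cos (θ * (((colOf hn1 σ + (-1) : ZMod m)).val:ℝ)) * w j') := h
      _ = Real.cos (θ * (((colOf hn1 σ)).val:ℝ))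
            * (2 * (((posOf hn1 σ)).val : ℝ) * w (posOf hn1 σ)
              + c * ∑ j', Emat n (posOf hn1 σ) j' * w j') := by
          rw [hsum]
          ring
      _ = Real.cos (θ * (((colOf hn1 σ)).val:ℝ)) * ((McM n c *ᵥ w) (posOf hn1 σ)) := by
          rw [McM_mulVec]
      _ = Real.cos (θ * (((colOf hn1 σ)).val:ℝ)) * (μ * w (posOf hn1 σ)) := by
          rw [heig]
          simp
      _ = (μ • x2) σ := by
          rw [hx2def]
          simp only [Pi.smul_apply, smul_eq_mul]
          ring
  obtain ⟨j0, hj0⟩ := Function.ne_iff.mp hw0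
  set σ0 : ColouredPerm m n := (fun _ => (0:ZMod m), Equiv.swap (zeroF n hn1) j0) with hσ0
  have hpos0 : posOf hn1 σ0 = j0 := by
    unfold posOf
    rw [hσ0]
    simp [Equiv.swap_inv, Equiv.swap_apply_left]
  have hcol0 : colOf hn1 σ0 = 0 := rfl
  have hx20 : x2 σ0 = w j0 := by
    rw [hx2def]
    dsimp only
    rw [hpos0, hcol0, ZMod.val_zero]
    norm_num
  have hx2ne : x2 ≠ 0 := by
    intro h
    apply hj0
    rw [← hx20, h]
    rfl
  have hroot2 : μ ∈ A.charpoly.roots := (eig_iff_root _ A μ).mpr ⟨x2, hx2ne, h2eig⟩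
  -- all roots are at most 2n
  have hbound : ∀ η ∈ A.charpoly.roots, η ≤ 2*(n:ℝ) := by
    intro η hη
    obtain ⟨v, hv0, hveq⟩ := (eig_iff_root _ A η).mp hη
    obtain ⟨σm, -, hσm⟩ := Finset.exists_max_image Finset.univ (fun σ => |v σ|)
      ⟨σ0, Finset.mem_univ _⟩
    have hvm : ∀ τ, |v τ| ≤ |v σm| := fun τ => hσm τ (Finset.mem_univ τ)
    have hvmpos : 0 < |v σm| := by
      obtain ⟨τ0, hτ0⟩ := Function.ne_iff.mp hv0
      exact lt_of_lt_of_le (abs_pos.mpr hτ0) (hvm τ0)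
    have hAnn : ∀ σ τ : ColouredPerm m n, 0 ≤ A σ τ := by
      intro σ τ
      show 0 ≤ (if pancakeAdj m n σ τ then (1:ℝ) else 0)
      split_ifs <;> norm_num
    have h1 : |η| * |v σm| ≤ 2*(n:ℝ) * |v σm| := by
      have h2 : η * v σm = ∑ τ, A σm τ * v τ := by
        calc η * v σm = (η • v) σm := rfl
          _ = (A *ᵥ v) σm := (congrFun hveq σm).symm
          _ = ∑ τ, A σm τ * v τ := rfl
      calc |η| * |v σm| = |η * v σm| := (abs_mul η (v σm)).symm
        _ = |∑ τ, A σm τ * v τ| := by rw [h2]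
        _ ≤ ∑ τ, |A σm τ * v τ| := Finset.abs_sum_le_sum_abs _ _
        _ = ∑ τ, A σm τ * |v τ| := by
            refine Finset.sum_congr rfl fun τ _ => ?_
            rw [abs_mul, abs_of_nonneg (hAnn σm τ)]
        _ ≤ ∑ τ, A σm τ * |v σm| := Finset.sum_le_sum fun τ _ =>
            mul_le_mul_of_nonneg_left (hvm τ) (hAnn σm τ)
        _ = (∑ τ, A σm τ) * |v σm| := by rw [Finset.sum_mul]
        _ = 2*(n:ℝ) * |v σm| := by rw [hones σm]
    have h3 : |η| ≤ 2*(n:ℝ) := (mul_le_mul_iff_of_pos_right hvmpos).mp h1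
    exact le_trans (le_abs_self η) h3
  have hneq : 2*(n:ℝ) ≠ μ := ne_of_gt hμhigh
  have hkey := sorted_gap A.charpoly.roots (2*(n:ℝ)) μ (2*(n:ℝ)) hroot1 hroot2 hneq hbound
  have hmin : min (2*(n:ℝ)) μ = μ := min_eq_right (le_of_lt hμhigh)
  rw [hmin] at hkey
  unfold nthLargestEig
  show ((A.charpoly.roots.sort (· ≤ ·)).reverse).getD 0 0
      - ((A.charpoly.roots.sort (· ≤ ·)).reverse).getD 1 0 < 2
  calc ((A.charpoly.roots.sort (· ≤ ·)).reverse).getD 0 0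
        - ((A.charpoly.roots.sort (· ≤ ·)).reverse).getD 1 0
      ≤ 2*(n:ℝ) - μ := hkey
    _ < 2 := by linarith
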